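/- Let ρ be a density matrix on ℂ^{d₁}⊗ℂ^{d₂}, with blocks ρ_{nm} (each ρ_{nm} a d₁×d₁ matrix) so that ρ = Σ_{n,m} ρ_{nm} ⊗ E_{nm}, where E_{nm} = |n⟩⟨m| in the standard basis of ℂ^{d₂}. Then for every density matrix σ on ℂ^{d₂} and every Hermitian matrix τ on ℂ^{d₁}⊗ℂ^{d₂}⊗ℂ^{d₂} whose partial traces over the second and the third tensor factor are both zero, the matrix T = Σ_{n,m} ρ_{nm} ⊗ E_{nm} ⊗ σ + Σ_{n,m} ρ_{nm} ⊗ σ ⊗ E_{nm} − (tr^{(2)}ρ) ⊗ σ ⊗ σ + τ is Hermitian and its partial traces over the second and over the third tensor factor both equal ρ (here tr^{(2)}ρ is the reduced density matrix of ρ on ℂ^{d₁}). -/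

import Mathlib

open Matrix
open scoped Kronecker ComplexOrder

namespace BellPaper

variable {α β γ : Type*} [Fintype α] [Fintype β] [Fintype γ]

/-- Partial trace over the first factor of a threefold tensor product. -/
noncomputable def ptr1 (T : Matrix ((α × β) × γ) ((α × β) × γ) ℂ) :
    Matrix (β × γ) (β × γ) ℂ :=
  fun p q => ∑ i : α, T ((i, p.1), p.2) ((i, q.1), q.2)

/-- Partial trace over the second factor of a threefold tensor product. -/
noncomputable def ptr2 (T : Matrix ((α × β) × γ) ((α × β) × γ) ℂ) :
    Matrix (α × γ) (α × γ) ℂ :=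
  fun p q => ∑ j : β, T ((p.1, j), p.2) ((q.1, j), q.2)

/-- Partial trace over the third factor of a threefold tensor product. -/
noncomputable def ptr3 (T : Matrix ((α × β) × γ) ((α × β) × γ) ℂ) :
    Matrix (α × β) (α × β) ℂ :=
  fun p q => ∑ k : γ, T (p, k) (q, k)

/-- Partial trace over the second factor of a twofold tensor product. -/
noncomputable def ptrB (M : Matrix (α × β) (α × β) ℂ) : Matrix α α ℂ :=
  fun i i' => ∑ j : β, M (i, j) (i', j)

/-- A density matrix: positive semidefinite with unit trace. -/
def IsDensityMatrix {n : Type*} [Fintype n] (ρ : Matrix n n ℂ) : Prop :=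
  ρ.PosSemidef ∧ ρ.trace = 1

/-- Source-operator of type `T₁₂₂` for a state on ℂ^{d₁}⊗ℂ^{d₂}. -/
def IsSource122 {d₁ d₂ : ℕ} (ρ : Matrix (Fin d₁ × Fin d₂) (Fin d₁ × Fin d₂) ℂ)
    (T : Matrix ((Fin d₁ × Fin d₂) × Fin d₂) ((Fin d₁ × Fin d₂) × Fin d₂) ℂ) : Prop :=
  T.IsHermitian ∧ ptr2 T = ρ ∧ ptr3 T = ρ

/-- Source-operator of type `T₁₁₂` for a state on ℂ^{d₁}⊗ℂ^{d₂}. -/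
def IsSource112 {d₁ d₂ : ℕ} (ρ : Matrix (Fin d₁ × Fin d₂) (Fin d₁ × Fin d₂) ℂ)
    (S : Matrix ((Fin d₁ × Fin d₁) × Fin d₂) ((Fin d₁ × Fin d₁) × Fin d₂) ℂ) : Prop :=
  S.IsHermitian ∧ ptr1 S = ρ ∧ ptr2 S = ρ

/-- A DSO state: a density matrix admitting a positive semidefinite source-operator. -/
def IsDSO {d₁ d₂ : ℕ} (ρ : Matrix (Fin d₁ × Fin d₂) (Fin d₁ × Fin d₂) ℂ) : Prop :=
  IsDensityMatrix ρ ∧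
    ((∃ T, T.PosSemidef ∧ IsSource122 ρ T) ∨ (∃ S, S.PosSemidef ∧ IsSource112 ρ S))

/-- A Bell class state: a density matrix admitting a density source-operator with the
special dilation property (all three partial traces equal the state). -/
def IsBellClass {d : ℕ} (ρ : Matrix (Fin d × Fin d) (Fin d × Fin d) ℂ) : Prop :=
  IsDensityMatrix ρ ∧
    ∃ T : Matrix ((Fin d × Fin d) × Fin d) ((Fin d × Fin d) × Fin d) ℂ,
      T.PosSemidef ∧ ptr1 T = ρ ∧ ptr2 T = ρ ∧ ptr3 T = ρ

/-- The operator (spectral) norm of a matrix acting on a Euclidean space. -/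
noncomputable def opNorm {n : Type*} [Fintype n] [DecidableEq n] (W : Matrix n n ℂ) : ℝ :=
  ‖Matrix.toEuclideanCLM (𝕜 := ℂ) W‖

/-- The swap (permutation) operator `V_d` on ℂ^d ⊗ ℂ^d. -/
noncomputable def swapMat (d : ℕ) : Matrix (Fin d × Fin d) (Fin d × Fin d) ℂ :=
  fun p q => if p.1 = q.2 ∧ p.2 = q.1 then 1 else 0

/-- The Werner state on ℂ^d ⊗ ℂ^d. -/
noncomputable def werner (d : ℕ) : Matrix (Fin d × Fin d) (Fin d × Fin d) ℂ :=
  (((d : ℂ) + 1) / (d : ℂ) ^ 3) • (1 : Matrix (Fin d × Fin d) (Fin d × Fin d) ℂ)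
    - ((d : ℂ) ^ 2)⁻¹ • swapMat d

/-- The triple of indices of a point of the threefold product. -/
def triple {d : ℕ} (p : (Fin d × Fin d) × Fin d) : Fin 3 → Fin d := ![p.1.1, p.1.2, p.2]

/-- The unitary permuting the three tensor factors of ℂ^d ⊗ ℂ^d ⊗ ℂ^d according to π. -/
noncomputable def permMat (d : ℕ) (π : Equiv.Perm (Fin 3)) :
    Matrix ((Fin d × Fin d) × Fin d) ((Fin d × Fin d) × Fin d) ℂ :=
  fun p q => if ∀ i, triple p (π i) = triple q i then 1 else 0

/-- The antisymmetrization projection `Q_d^{(-)}` on ℂ^d ⊗ ℂ^d ⊗ ℂ^d. -/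
noncomputable def antisym (d : ℕ) :
    Matrix ((Fin d × Fin d) × Fin d) ((Fin d × Fin d) × Fin d) ℂ :=
  (6 : ℂ)⁻¹ • ∑ π : Equiv.Perm (Fin 3), (((Equiv.Perm.sign π : ℤ) : ℂ)) • permMat d π

/-- Tensor product of two vectors. -/
def tens {m n : Type*} (u : m → ℂ) (v : n → ℂ) : m × n → ℂ := fun p => u p.1 * v p.2

/-- The rank-one operator |v⟩⟨v|. -/
noncomputable def outer {n : Type*} (v : n → ℂ) : Matrix n n ℂ :=
  Matrix.vecMulVec v (star v)


/-- the explicit construction (7) yields a source-operator of type `T₁₂₂`. -/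
theorem explicit_source_operator {d₁ d₂ : ℕ}
    (ρ : Matrix (Fin d₁ × Fin d₂) (Fin d₁ × Fin d₂) ℂ) (hρ : IsDensityMatrix ρ)
    (ρb : Fin d₂ → Fin d₂ → Matrix (Fin d₁) (Fin d₁) ℂ)
    (hρb : ρ = ∑ n : Fin d₂, ∑ m : Fin d₂, ρb n m ⊗ₖ Matrix.single n m (1 : ℂ))
    (σ : Matrix (Fin d₂) (Fin d₂) ℂ) (hσ : IsDensityMatrix σ)
    (τ : Matrix ((Fin d₁ × Fin d₂) × Fin d₂) ((Fin d₁ × Fin d₂) × Fin d₂) ℂ)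
    (hτ : τ.IsHermitian) (hτ2 : ptr2 τ = 0) (hτ3 : ptr3 τ = 0)
    (T : Matrix ((Fin d₁ × Fin d₂) × Fin d₂) ((Fin d₁ × Fin d₂) × Fin d₂) ℂ)
    (hT : T = (∑ n : Fin d₂, ∑ m : Fin d₂,
          (ρb n m ⊗ₖ Matrix.single n m (1 : ℂ)) ⊗ₖ σ)
        + (∑ n : Fin d₂, ∑ m : Fin d₂,
          (ρb n m ⊗ₖ σ) ⊗ₖ Matrix.single n m (1 : ℂ))
        - (ptrB ρ ⊗ₖ σ) ⊗ₖ σ + τ) :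
    T.IsHermitian ∧ ptr2 T = ρ ∧ ptr3 T = ρ := by
  obtain ⟨hρps, hρtr⟩ := hρ
  obtain ⟨hσps, hσtr⟩ := hσ
  have hρh := hρps.1
  have hσh := hσps.1
  have hb : ∀ (n m : Fin d₂) (i i' : Fin d₁), ρb n m i i' = ρ (i, n) (i', m) := by
    intro n m i i'
    conv_rhs => rw [hρb]
    simp [Matrix.sum_apply, Matrix.single, mul_ite, ite_and,
      Finset.sum_ite_eq', Finset.sum_ite_eq]
  have hTe : ∀ (i i' : Fin d₁) (j k j' k' : Fin d₂),
      T ((i, j), k) ((i', j'), k') =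
        ρ (i, j) (i', j') * σ k k' + ρ (i, k) (i', k') * σ j j'
          - ptrB ρ i i' * σ j j' * σ k k' + τ ((i, j), k) ((i', j'), k') := by
    intro i i' j k j' k'
    rw [hT]
    simp only [Matrix.add_apply, Matrix.sub_apply, Matrix.sum_apply,
      Matrix.kroneckerMap_apply, Matrix.single, Matrix.of_apply]
    simp [mul_ite, ite_mul, hb, ite_and, Finset.sum_ite_eq', Finset.sum_ite_eq,
      mul_comm, mul_assoc, mul_left_comm]
  have hσtr' : ∑ j : Fin d₂, σ j j = 1 := hσtr
  have hptrBh : ∀ i i' : Fin d₁, star (ptrB ρ i' i) = ptrB ρ i i' := by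
    intro i i'
    unfold ptrB
    rw [star_sum]
    exact Finset.sum_congr rfl fun j _ => hρh.apply _ _
  refine ⟨?_, ?_, ?_⟩
  · rw [Matrix.IsHermitian]
    ext ⟨⟨i, j⟩, k⟩ ⟨⟨i', j'⟩, k'⟩
    rw [Matrix.conjTranspose_apply, hTe, hTe]
    simp only [star_add, star_sub, star_mul']
    simp only [hρh.apply, hσh.apply, hptrBh, hτ.apply]
  · ext ⟨i, k⟩ ⟨i', k'⟩
    have h2 : ptr2 τ (i, k) (i', k') = 0 := by rw [hτ2]; rfl
    unfold ptr2 at h2 ⊢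
    simp only [hTe, Finset.sum_add_distrib, Finset.sum_sub_distrib]
    have eA : ∑ j : Fin d₂, ρ (i, j) (i', j) * σ k k' = ptrB ρ i i' * σ k k' := by
      rw [← Finset.sum_mul]; rfl
    have eB : ∑ j : Fin d₂, ρ (i, k) (i', k') * σ j j = ρ (i, k) (i', k') := by
      rw [← Finset.mul_sum, hσtr', mul_one]
    have eC : ∑ j : Fin d₂, ptrB ρ i i' * σ j j * σ k k' = ptrB ρ i i' * σ k k' := by
      rw [← Finset.sum_mul, ← Finset.mul_sum, hσtr', mul_one]
    rw [eA, eB, eC, h2]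
    ring
  · ext ⟨i, j⟩ ⟨i', j'⟩
    have h3 : ptr3 τ (i, j) (i', j') = 0 := by rw [hτ3]; rfl
    unfold ptr3 at h3 ⊢
    simp only [hTe, Finset.sum_add_distrib, Finset.sum_sub_distrib]
    have eA : ∑ k : Fin d₂, ρ (i, j) (i', j') * σ k k = ρ (i, j) (i', j') := by
      rw [← Finset.mul_sum, hσtr', mul_one]
    have eB : ∑ k : Fin d₂, ρ (i, k) (i', k) * σ j j' = ptrB ρ i i' * σ j j' := by
      rw [← Finset.sum_mul]; rfl
    have eC : ∑ k : Fin d₂, ptrB ρ i i' * σ j j' * σ k k = ptrB ρ i i' * σ j j' := by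
      rw [← Finset.mul_sum, hσtr', mul_one]
    rw [eA, eB, eC, h3]
    ring

end BellPaper
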